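/- Under the errors-in-variables model with U_1,…,U_K, ε mutually independent and (U_1,…,U_K,ε) independent of X*, assume all of X*_1,…,X*_K, U_1,…,U_K, ε are square-integrable. Fix b ∈ ℝ^K and u ∈ ℝ, and suppose φ_{(X,Y)} is nonzero at the point s(b,u) := (b_1u,…,b_Ku,−u). Then for all indices k_1 ≠ k_2 with 1 ≤ k_1,k_2 ≤ K: Cov(X_{k_1},X_{k_2}) + Λ_{k_1,k_2}[φ_{(X,Y)}](s(b,u)) = Cov(X*_{k_1},X*_{k_2}) + Λ_{k_1,k_2}[φ_{X*}](u(b_1−β_1),…,u(b_K−β_K)). -/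

import Mathlib

open MeasureTheory ProbabilityTheory

/-- Characteristic function of a random vector `Z : Ω → (Fin d → ℝ)`. -/
noncomputable def charF {Ω : Type*} [MeasurableSpace Ω] (μ : Measure Ω) {d : ℕ}
    (Z : Ω → Fin d → ℝ) (s : Fin d → ℝ) : ℂ :=
  ∫ ω, Complex.exp (Complex.I * ((∑ k, s k * Z ω k : ℝ) : ℂ)) ∂μ

/-- Partial derivative of `φ : ℝ^d → ℂ` in the `j`-th coordinate direction. -/
noncomputable def pd {d : ℕ} (j : Fin d) (φ : (Fin d → ℝ) → ℂ) (s : Fin d → ℝ) : ℂ :=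
  fderiv ℝ φ s (Pi.single j 1)

/-- Second-order logarithmic derivative
`Λ_{j,k}[φ](s) = ∂_j∂_kφ(s)/φ(s) − (∂_jφ(s))(∂_kφ(s))/φ(s)²`. -/
noncomputable def Lam {d : ℕ} (j k : Fin d) (φ : (Fin d → ℝ) → ℂ) (s : Fin d → ℝ) : ℂ :=
  pd j (pd k φ) s / φ s - (pd j φ s) * (pd k φ s) / (φ s) ^ 2

/-- Covariance of two real random variables. -/
noncomputable def cov {Ω : Type*} [MeasurableSpace Ω] (μ : Measure Ω) (f g : Ω → ℝ) : ℝ :=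
  ∫ ω, f ω * g ω ∂μ - (∫ ω, f ω ∂μ) * (∫ ω, g ω ∂μ)

namespace EIVAux

noncomputable def ell {d : ℕ} (z : Fin d → ℝ) : (Fin d → ℝ) →L[ℝ] ℂ :=
  ∑ k, z k • (Complex.ofRealCLM.comp (ContinuousLinearMap.proj k))

lemma ell_apply {d : ℕ} (z v : Fin d → ℝ) : ell z v = ((∑ k, v k * z k : ℝ) : ℂ) := by
  simp [ell, ContinuousLinearMap.sum_apply, Complex.real_smul]
  exact Finset.sum_congr rfl fun k _ => mul_comm _ _

lemma ell_norm {d : ℕ} (z : Fin d → ℝ) : ‖ell z‖ ≤ ∑ k, |z k| := by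
  refine (norm_sum_le _ _).trans ?_
  refine Finset.sum_le_sum fun k _ => ?_
  refine le_trans (ContinuousLinearMap.opNorm_smul_le _ _) ?_
  have h1 : ‖(Complex.ofRealCLM.comp (ContinuousLinearMap.proj k) : (Fin d → ℝ) →L[ℝ] ℂ)‖ ≤ 1 := by
    refine ContinuousLinearMap.opNorm_le_bound _ zero_le_one fun v => ?_
    simp only [ContinuousLinearMap.coe_comp', Function.comp_apply, ContinuousLinearMap.proj_apply,
      Complex.ofRealCLM_apply, Complex.norm_real, one_mul]
    exact norm_le_pi_norm v k
  calc ‖z k‖ * ‖(Complex.ofRealCLM.comp (ContinuousLinearMap.proj k) : (Fin d → ℝ) →L[ℝ] ℂ)‖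
      ≤ |z k| * 1 := mul_le_mul_of_nonneg_left h1 (abs_nonneg _)
    _ = |z k| := mul_one _

lemma hasFDerivAt_exp_sum {d : ℕ} (z : Fin d → ℝ) (x : Fin d → ℝ) :
    HasFDerivAt (fun x : Fin d → ℝ => Complex.exp (Complex.I * ((∑ k, x k * z k : ℝ) : ℂ)))
      ((Complex.exp (Complex.I * ((∑ k, x k * z k : ℝ) : ℂ)) * Complex.I) • ell z) x := by
  have h1 : HasFDerivAt (fun x : Fin d → ℝ => ((∑ k, x k * z k : ℝ) : ℂ)) (ell z) x := by
    have := (ell z).hasFDerivAt (x := x)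
    convert this using 1
    ext v
    exact (ell_apply z v).symm
  have h2 : HasDerivAt (fun w : ℂ => Complex.exp (Complex.I * w))
      (Complex.exp (Complex.I * ((∑ k, x k * z k : ℝ) : ℂ)) * Complex.I)
      (((∑ k, x k * z k : ℝ) : ℂ)) := by
    simpa [mul_comm] using ((hasDerivAt_id (((∑ k, x k * z k : ℝ) : ℂ))).const_mul Complex.I).cexp
  have := (h2.comp_hasFDerivAt x h1)
  exact this

lemma norm_exp_I_mul (x : ℝ) : ‖Complex.exp (Complex.I * (x : ℂ))‖ = 1 := by
  rw [mul_comm]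
  exact Complex.norm_exp_ofReal_mul_I x

variable {Ω : Type*} [MeasurableSpace Ω] {μ : Measure Ω} [IsProbabilityMeasure μ] {d : ℕ}

lemma measurable_cexpI {f : Ω → ℝ} (hf : Measurable f) :
    Measurable fun ω => Complex.exp (Complex.I * (f ω : ℂ)) :=
  Complex.measurable_exp.comp (measurable_const.mul (Complex.measurable_ofReal.comp hf))

lemma measurable_cexpI' {β : Type*} [MeasurableSpace β] {f : β → ℝ} (hf : Measurable f) :
    Measurable fun x => Complex.exp (Complex.I * (f x : ℂ)) :=
  Complex.measurable_exp.comp (measurable_const.mul (Complex.measurable_ofReal.comp hf))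

omit [IsProbabilityMeasure μ] in
lemma integrable_mul_exp {f g : Ω → ℝ} (hf : Integrable f μ) (hgm : Measurable g) :
    Integrable (fun ω => (f ω : ℂ) * Complex.exp (Complex.I * (g ω : ℂ))) μ := by
  refine Integrable.mono' hf.abs ?_ ?_
  · exact (Complex.continuous_ofReal.comp_aestronglyMeasurable hf.aestronglyMeasurable).mul
      (measurable_cexpI hgm).aestronglyMeasurable
  · filter_upwards with ω
    rw [norm_mul, norm_exp_I_mul, mul_one, Complex.norm_real, Real.norm_eq_abs]

omit [IsProbabilityMeasure μ] in
lemma memL2_int_mul {f g : Ω → ℝ} (hf : MemLp f 2 μ) (hg : MemLp g 2 μ) :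
    Integrable (fun ω => f ω * g ω) μ := by
  have h1 := hf.integrable_sq
  have h2 := hg.integrable_sq
  refine Integrable.mono' (h1.add h2) (hf.aestronglyMeasurable.mul hg.aestronglyMeasurable) ?_
  filter_upwards with ω
  simp only [Real.norm_eq_abs, abs_mul, Pi.add_apply]
  nlinarith [sq_nonneg (|f ω| - |g ω|), abs_nonneg (f ω), abs_nonneg (g ω),
    sq_abs (f ω), sq_abs (g ω)]

lemma indep_integral_mul {β γ 𝕜 : Type*} [MeasurableSpace β] [MeasurableSpace γ] [RCLike 𝕜]
    {f : Ω → β} {g : Ω → γ} (h : IndepFun f g μ) (hf : Measurable f) (hg : Measurable g)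
    (F : β → 𝕜) (G : γ → 𝕜) (hF : Measurable F) (hG : Measurable G) :
    ∫ ω, F (f ω) * G (g ω) ∂μ = (∫ ω, F (f ω) ∂μ) * ∫ ω, G (g ω) ∂μ := by
  rw [indepFun_iff_map_prod_eq_prod_map_map hf.aemeasurable hg.aemeasurable] at h
  have hFG : AEStronglyMeasurable (fun p : β × γ => F p.1 * G p.2)
      (μ.map (fun ω => (f ω, g ω))) :=
    ((hF.comp measurable_fst).mul (hG.comp measurable_snd)).aestronglyMeasurable
  calc ∫ ω, F (f ω) * G (g ω) ∂μ
      = ∫ p, F p.1 * G p.2 ∂(μ.map (fun ω => (f ω, g ω))) := by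
        rw [integral_map (hf.prodMk hg).aemeasurable hFG]
    _ = ∫ p, F p.1 * G p.2 ∂((μ.map f).prod (μ.map g)) := by rw [h]
    _ = (∫ x, F x ∂(μ.map f)) * ∫ y, G y ∂(μ.map g) := integral_prod_mul F G
    _ = _ := by rw [integral_map hf.aemeasurable hF.aestronglyMeasurable,
          integral_map hg.aemeasurable hG.aestronglyMeasurable]


lemma key_deriv (Z : Ω → Fin d → ℝ) (hZm : Measurable Z) (g : Ω → ℂ) (hgm : Measurable g)
    (hgint : Integrable g μ)
    (hZg : Integrable (fun ω => ‖g ω‖ * ∑ k, |Z ω k|) μ) (s₀ : Fin d → ℝ) (j : Fin d) :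
    pd j (fun s => ∫ ω, g ω * Complex.exp (Complex.I * ((∑ k, s k * Z ω k : ℝ) : ℂ)) ∂μ) s₀
      = ∫ ω, Complex.I * (Z ω j) * g ω
          * Complex.exp (Complex.I * ((∑ k, s₀ k * Z ω k : ℝ) : ℂ)) ∂μ := by
  classical
  set F : (Fin d → ℝ) → Ω → ℂ :=
    fun s ω => g ω * Complex.exp (Complex.I * ((∑ k, s k * Z ω k : ℝ) : ℂ)) with hF
  set F' : (Fin d → ℝ) → Ω → (Fin d → ℝ) →L[ℝ] ℂ := fun s ω =>
    (g ω * Complex.exp (Complex.I * ((∑ k, s k * Z ω k : ℝ) : ℂ)) * Complex.I) • ell (Z ω)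
    with hF'
  have hmeasS : ∀ s : Fin d → ℝ, Measurable (F s) := by
    intro s
    apply hgm.mul
    exact measurable_cexpI (Finset.measurable_sum _ fun k _ =>
      (measurable_const.mul ((measurable_pi_apply k).comp hZm)))
  have hFint : ∀ s, Integrable (F s) μ := by
    intro s
    refine Integrable.mono' hgint.norm (hmeasS s).aestronglyMeasurable ?_
    filter_upwards with ω
    simp only [hF, norm_mul, norm_exp_I_mul, mul_one, le_refl]
  have hF'meas : AEStronglyMeasurable (F' s₀) μ := by
    apply Measurable.aestronglyMeasurable
    simp only [hF']
    unfold ell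
    apply Measurable.smul (f := fun ω => (g ω * Complex.exp (Complex.I * ((∑ k, s₀ k * Z ω k : ℝ) : ℂ)) * Complex.I))
    · exact (hmeasS s₀).mul measurable_const
    · apply Finset.measurable_sum
      intro k _
      exact ((measurable_pi_apply k).comp hZm).smul measurable_const
  have h_bound : ∀ᵐ ω ∂μ, ∀ x ∈ Metric.ball s₀ 1, ‖F' x ω‖ ≤ ‖g ω‖ * ∑ k, |Z ω k| := by
    filter_upwards with ω x _
    simp only [hF']
    refine le_trans (ContinuousLinearMap.opNorm_smul_le _ _) ?_
    have h2 : ‖g ω * Complex.exp (Complex.I * ((∑ k, x k * Z ω k : ℝ) : ℂ)) * Complex.I‖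
        = ‖g ω‖ := by
      rw [norm_mul, norm_mul, norm_exp_I_mul, Complex.norm_I, mul_one, mul_one]
    rw [h2]
    exact mul_le_mul_of_nonneg_left (ell_norm (Z ω)) (norm_nonneg _)
  have h_diff : ∀ᵐ ω ∂μ, ∀ x ∈ Metric.ball s₀ 1, HasFDerivAt (fun s => F s ω) (F' x ω) x := by
    filter_upwards with ω x _
    have := (hasFDerivAt_exp_sum (Z ω) x).const_mul (g ω)
    refine this.congr_fderiv ?_
    simp only [hF']
    rw [smul_smul]
    ring_nf
  have main := hasFDerivAt_integral_of_dominated_of_fderiv_le (μ := μ) (𝕜 := ℝ)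
    (F := F) (F' := F') (bound := fun ω => ‖g ω‖ * ∑ k, |Z ω k|) (Metric.ball_mem_nhds s₀ one_pos)
    (.of_forall fun s => (hmeasS s).aestronglyMeasurable) (hFint s₀) hF'meas h_bound hZg h_diff
  have hF'int : Integrable (F' s₀) μ := by
    refine Integrable.mono' hZg hF'meas ?_
    filter_upwards with ω
    simp only [hF']
    refine le_trans (ContinuousLinearMap.opNorm_smul_le _ _) ?_
    have h2 : ‖g ω * Complex.exp (Complex.I * ((∑ k, s₀ k * Z ω k : ℝ) : ℂ)) * Complex.I‖
        = ‖g ω‖ := by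
      rw [norm_mul, norm_mul, norm_exp_I_mul, Complex.norm_I, mul_one, mul_one]
    rw [h2]
    exact mul_le_mul_of_nonneg_left (ell_norm (Z ω)) (norm_nonneg _)
  rw [pd, main.fderiv, ContinuousLinearMap.integral_apply hF'int]
  refine integral_congr_ae (.of_forall fun ω => ?_)
  rw [hF']
  simp only [ContinuousLinearMap.smul_apply, ell_apply]
  have : ((∑ k, (Pi.single j (1:ℝ) : Fin d → ℝ) k * Z ω k : ℝ) : ℂ) = (Z ω j : ℂ) := by
    norm_cast
    rw [Finset.sum_eq_single j]
    · simp
    · intro k _ hkj; simp [Pi.single_apply, hkj]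
    · simp
  rw [this]
  simp only [smul_eq_mul]
  ring

lemma pd_charF (Z : Ω → Fin d → ℝ) (hZm : Measurable Z)
    (hint : ∀ k, Integrable (fun ω => Z ω k) μ) (j : Fin d) (s₀ : Fin d → ℝ) :
    pd j (charF μ Z) s₀
      = ∫ ω, Complex.I * (Z ω j)
          * Complex.exp (Complex.I * ((∑ k, s₀ k * Z ω k : ℝ) : ℂ)) ∂μ := by
  have hone : charF μ Z
      = fun s => ∫ ω, (1:ℂ) * Complex.exp (Complex.I * ((∑ k, s k * Z ω k : ℝ) : ℂ)) ∂μ := by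
    funext s
    simp [charF]
  have h := key_deriv Z hZm (fun _ => (1:ℂ)) measurable_const (integrable_const 1)
      (by simpa using integrable_finset_sum Finset.univ (fun k _ => (hint k).abs)) s₀ j
  rw [hone, h]
  simp [mul_one]

lemma pd_pd_charF (Z : Ω → Fin d → ℝ) (hZm : Measurable Z)
    (hL2 : ∀ k, MemLp (fun ω => Z ω k) 2 μ) (j k : Fin d) (s₀ : Fin d → ℝ) :
    pd j (pd k (charF μ Z)) s₀
      = -∫ ω, ((Z ω j : ℂ) * (Z ω k : ℂ))
          * Complex.exp (Complex.I * ((∑ i, s₀ i * Z ω i : ℝ) : ℂ)) ∂μ := by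
  have hint : ∀ i, Integrable (fun ω => Z ω i) μ := fun i => (hL2 i).integrable one_le_two
  have hgm : Measurable (fun ω => Complex.I * (Z ω k : ℂ)) :=
    measurable_const.mul (Complex.measurable_ofReal.comp ((measurable_pi_apply k).comp hZm))
  have hgint : Integrable (fun ω => Complex.I * (Z ω k : ℂ)) μ :=
    ((hint k).ofReal).const_mul Complex.I
  have hZg : Integrable (fun ω => ‖Complex.I * (Z ω k : ℂ)‖ * ∑ i, |Z ω i|) μ := by
    have base : Integrable (fun ω => ∑ i, |Z ω k| * |Z ω i|) μ := by
      refine integrable_finset_sum _ fun i _ => ?_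
      refine ((memL2_int_mul (hL2 k) (hL2 i)).abs).congr (.of_forall fun ω => ?_)
      simp only [abs_mul]
    refine base.congr (.of_forall fun ω => ?_)
    simp only [← Finset.mul_sum, norm_mul, Complex.norm_I, one_mul, Complex.norm_real,
      Real.norm_eq_abs]
  have hfun : pd k (charF μ Z)
      = fun s => ∫ ω, (Complex.I * (Z ω k : ℂ))
          * Complex.exp (Complex.I * ((∑ i, s i * Z ω i : ℝ) : ℂ)) ∂μ := by
    funext s
    rw [pd_charF Z hZm hint k s]
  rw [hfun, key_deriv Z hZm _ hgm hgint hZg s₀ j, ← integral_neg]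
  refine integral_congr_ae (.of_forall fun ω => ?_)
  have hII : Complex.I * Complex.I = -1 := Complex.I_mul_I
  calc Complex.I * (Z ω j : ℂ) * (Complex.I * (Z ω k : ℂ))
        * Complex.exp (Complex.I * ((∑ i, s₀ i * Z ω i : ℝ) : ℂ))
      = (Complex.I * Complex.I) * (((Z ω j : ℂ) * (Z ω k : ℂ))
          * Complex.exp (Complex.I * ((∑ i, s₀ i * Z ω i : ℝ) : ℂ))) := by ring
    _ = _ := by rw [hII]; ring

lemma Lam_charF (Z : Ω → Fin d → ℝ) (hZm : Measurable Z)
    (hL2 : ∀ k, MemLp (fun ω => Z ω k) 2 μ) (j k : Fin d) (s : Fin d → ℝ) :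
    Lam j k (charF μ Z) s
      = -(∫ ω, ((Z ω j : ℂ) * (Z ω k : ℂ))
            * Complex.exp (Complex.I * ((∑ i, s i * Z ω i : ℝ) : ℂ)) ∂μ) / charF μ Z s
        + (∫ ω, (Z ω j : ℂ) * Complex.exp (Complex.I * ((∑ i, s i * Z ω i : ℝ) : ℂ)) ∂μ)
          * (∫ ω, (Z ω k : ℂ) * Complex.exp (Complex.I * ((∑ i, s i * Z ω i : ℝ) : ℂ)) ∂μ)
          / (charF μ Z s) ^ 2 := by
  have hint : ∀ i, Integrable (fun ω => Z ω i) μ := fun i => (hL2 i).integrable one_le_two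
  have h1 := pd_charF Z hZm hint j s
  have h2 := pd_charF Z hZm hint k s
  have h12 := pd_pd_charF Z hZm hL2 j k s
  have hpull : ∀ i : Fin d, ∫ ω, Complex.I * (Z ω i : ℂ)
      * Complex.exp (Complex.I * ((∑ i', s i' * Z ω i' : ℝ) : ℂ)) ∂μ
      = Complex.I * ∫ ω, (Z ω i : ℂ)
          * Complex.exp (Complex.I * ((∑ i', s i' * Z ω i' : ℝ) : ℂ)) ∂μ := by
    intro i
    rw [← integral_const_mul]
    refine integral_congr_ae (.of_forall fun ω => ?_)
    ring
  rw [Lam, h12, h1, h2, hpull j, hpull k]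
  have hII : Complex.I * Complex.I = -1 := Complex.I_mul_I
  set P := ∫ ω, (Z ω j : ℂ)
      * Complex.exp (Complex.I * ((∑ i', s i' * Z ω i' : ℝ) : ℂ)) ∂μ
  set Q := ∫ ω, (Z ω k : ℂ)
      * Complex.exp (Complex.I * ((∑ i', s i' * Z ω i' : ℝ) : ℂ)) ∂μ
  have : Complex.I * P * (Complex.I * Q) = -(P * Q) := by
    calc Complex.I * P * (Complex.I * Q) = (Complex.I * Complex.I) * (P * Q) := by ring
      _ = _ := by rw [hII]; ring
  rw [this]
  ring

end EIVAux

open EIVAux in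
theorem stmt3 {Ω : Type*} [MeasurableSpace Ω] (μ : Measure Ω) [IsProbabilityMeasure μ]
    (K : ℕ) (Xstar : Ω → Fin K → ℝ) (U : Fin K → Ω → ℝ) (eps : Ω → ℝ) (β : Fin K → ℝ)
    (X : Fin K → Ω → ℝ) (Y : Ω → ℝ)
    (hXm : Measurable Xstar) (hUm : ∀ k, Measurable (U k)) (hem : Measurable eps)
    (hX : ∀ k ω, X k ω = Xstar ω k + U k ω)
    (hY : ∀ ω, Y ω = ∑ k, β k * Xstar ω k + eps ω)
    (hIndep1 : iIndepFun ((Fin.snoc U eps : Fin (K+1) → Ω → ℝ)) μ)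
    (hIndep2 : IndepFun (fun ω => (fun k => U k ω, eps ω)) Xstar μ)
    (hL2X : ∀ k, MemLp (fun ω => Xstar ω k) 2 μ)
    (hL2U : ∀ k, MemLp (U k) 2 μ) (hL2e : MemLp eps 2 μ)
    (b : Fin K → ℝ) (u : ℝ)
    (hne : charF μ (fun ω => Fin.snoc (fun k => X k ω) (Y ω))
      (Fin.snoc (fun k => b k * u) (-u)) ≠ 0)
    (k1 k2 : Fin K) (hk : k1 ≠ k2) :
    (cov μ (X k1) (X k2) : ℂ)
        + Lam (Fin.castSucc k1) (Fin.castSucc k2)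
            (charF μ (fun ω => Fin.snoc (fun k => X k ω) (Y ω)))
            (Fin.snoc (fun k => b k * u) (-u))
      = (cov μ (fun ω => Xstar ω k1) (fun ω => Xstar ω k2) : ℂ)
          + Lam k1 k2 (charF μ Xstar) (fun k => u * (b k - β k)) := by
  classical
  set W : Ω → Fin (K+1) → ℝ := fun ω => Fin.snoc (fun k => X k ω) (Y ω) with hW
  set s0 : Fin (K+1) → ℝ := Fin.snoc (fun k => b k * u) (-u) with hs0
  set t0 : Fin K → ℝ := fun k => u * (b k - β k) with ht0
  set V : Fin (K+1) → Ω → ℝ := Fin.snoc U eps with hV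
  set P : Ω → (Fin K → ℝ) × ℝ := fun ω => (fun k => U k ω, eps ω) with hP
  -- basic measurability
  have hPm : Measurable P := (measurable_pi_lambda _ fun k => hUm k).prodMk hem
  have hXsm : ∀ k, Measurable fun ω => Xstar ω k := fun k => (measurable_pi_apply k).comp hXm
  have hVm : ∀ i, Measurable (V i) := by
    intro i
    refine Fin.lastCases ?_ ?_ i
    · simpa [hV, Fin.snoc_last] using hem
    · intro k; simpa [hV, Fin.snoc_castSucc] using hUm k
  have hXkm : ∀ k, Measurable (X k) := by
    intro k
    have : X k = fun ω => Xstar ω k + U k ω := funext fun ω => hX k ω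
    rw [this]; exact (hXsm k).add (hUm k)
  have hYm : Measurable Y := by
    have : Y = fun ω => ∑ k, β k * Xstar ω k + eps ω := funext hY
    rw [this]
    exact (Finset.measurable_sum _ fun k _ => measurable_const.mul (hXsm k)).add hem
  have hWm : Measurable W := by
    refine measurable_pi_lambda _ fun j => ?_
    refine Fin.lastCases ?_ ?_ j
    · simpa [hW, Fin.snoc_last] using hYm
    · intro k; simpa [hW, Fin.snoc_castSucc] using hXkm k
  -- L² and integrability
  have hL2Xk : ∀ k, MemLp (X k) 2 μ := by
    intro k
    have : X k = fun ω => Xstar ω k + U k ω := funext fun ω => hX k ω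
    rw [this]; exact (hL2X k).add (hL2U k)
  have hL2Y : MemLp Y 2 μ := by
    have : Y = fun ω => (∑ k, β k * Xstar ω k) + eps ω := funext hY
    rw [this]
    have hsum : MemLp (fun ω => ∑ k, β k * Xstar ω k) 2 μ := by
      have := memLp_finset_sum (μ := μ) Finset.univ
        (f := fun k ω => β k * Xstar ω k) (fun k _ => (hL2X k).const_mul (β k))
      simpa using this
    exact hsum.add hL2e
  have hWL2 : ∀ j, MemLp (fun ω => W ω j) 2 μ := by
    intro j
    refine Fin.lastCases ?_ ?_ j
    · simpa [hW, Fin.snoc_last] using hL2Y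
    · intro k; simpa [hW, Fin.snoc_castSucc] using hL2Xk k
  have hXsint : ∀ k, Integrable (fun ω => Xstar ω k) μ := fun k => (hL2X k).integrable one_le_two
  have hUint : ∀ k, Integrable (U k) μ := fun k => (hL2U k).integrable one_le_two
  -- coordinates of W
  have hWc : ∀ k ω, W ω (Fin.castSucc k) = Xstar ω k + U k ω := by
    intro k ω
    simp only [hW, Fin.snoc_castSucc]
    exact hX k ω
  -- exponent splitting
  have hexp : ∀ ω, (∑ j, s0 j * W ω j)
      = (∑ i, t0 i * Xstar ω i) + (∑ k, b k * u * U k ω + -u * eps ω) := by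
    intro ω
    rw [Fin.sum_univ_castSucc]
    simp only [hW, hs0, ht0, Fin.snoc_castSucc, Fin.snoc_last]
    rw [hY ω]
    simp only [hX]
    rw [mul_add, Finset.mul_sum]
    rw [show (∑ k, b k * u * (Xstar ω k + U k ω))
        = (∑ k, b k * u * Xstar ω k) + ∑ k, b k * u * U k ω from by
      rw [← Finset.sum_add_distrib]; exact Finset.sum_congr rfl fun k _ => by ring]
    rw [show (∑ i, u * (b i - β i) * Xstar ω i)
        = (∑ k, b k * u * Xstar ω k) + ∑ k, -u * (β k * Xstar ω k) from by
      rw [← Finset.sum_add_distrib]; exact Finset.sum_congr rfl fun k _ => by ring]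
    ring
  have hsplitE : ∀ x y : ℝ, Complex.exp (Complex.I * ((x + y : ℝ) : ℂ))
      = Complex.exp (Complex.I * (x:ℂ)) * Complex.exp (Complex.I * (y:ℂ)) := by
    intro x y
    rw [← Complex.exp_add]
    congr 1
    push_cast
    ring
  -- the two Λ computations
  have hLamW := EIVAux.Lam_charF (μ := μ) W hWm hWL2 (Fin.castSucc k1) (Fin.castSucc k2) s0
  have hLamX := EIVAux.Lam_charF (μ := μ) Xstar hXm hL2X k1 k2 t0
  -- names for the constituent integrals
  set a : ℂ := charF μ Xstar t0 with ha
  set p1 : ℂ := ∫ ω, (Xstar ω k1 : ℂ)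
      * Complex.exp (Complex.I * ((∑ i, t0 i * Xstar ω i : ℝ) : ℂ)) ∂μ with hp1
  set p2 : ℂ := ∫ ω, (Xstar ω k2 : ℂ)
      * Complex.exp (Complex.I * ((∑ i, t0 i * Xstar ω i : ℝ) : ℂ)) ∂μ with hp2
  set r : ℂ := ∫ ω, ((Xstar ω k1 : ℂ) * (Xstar ω k2 : ℂ))
      * Complex.exp (Complex.I * ((∑ i, t0 i * Xstar ω i : ℝ) : ℂ)) ∂μ with hr
  set c : ℂ := ∫ ω, Complex.exp
      (Complex.I * ((∑ k, b k * u * U k ω + -u * eps ω : ℝ) : ℂ)) ∂μ with hcc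
  set q1 : ℂ := ∫ ω, (U k1 ω : ℂ) * Complex.exp
      (Complex.I * ((∑ k, b k * u * U k ω + -u * eps ω : ℝ) : ℂ)) ∂μ with hq1
  set q2 : ℂ := ∫ ω, (U k2 ω : ℂ) * Complex.exp
      (Complex.I * ((∑ k, b k * u * U k ω + -u * eps ω : ℝ) : ℂ)) ∂μ with hq2
  set m : ℂ := ∫ ω, ((U k1 ω : ℂ) * (U k2 ω : ℂ)) * Complex.exp
      (Complex.I * ((∑ k, b k * u * U k ω + -u * eps ω : ℝ) : ℂ)) ∂μ with hm

  -- measurability of the letter functions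
  have hFAm : Measurable fun x : Fin K → ℝ =>
      Complex.exp (Complex.I * ((∑ i, t0 i * x i : ℝ) : ℂ)) :=
    EIVAux.measurable_cexpI' (Finset.measurable_sum _ fun i _ =>
      measurable_const.mul (measurable_pi_apply i))
  have hFA1m : Measurable fun x : Fin K → ℝ => (x k1 : ℂ)
      * Complex.exp (Complex.I * ((∑ i, t0 i * x i : ℝ) : ℂ)) :=
    (Complex.measurable_ofReal.comp (measurable_pi_apply k1)).mul hFAm
  have hFA2m : Measurable fun x : Fin K → ℝ => (x k2 : ℂ)
      * Complex.exp (Complex.I * ((∑ i, t0 i * x i : ℝ) : ℂ)) :=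
    (Complex.measurable_ofReal.comp (measurable_pi_apply k2)).mul hFAm
  have hFA12m : Measurable fun x : Fin K → ℝ => ((x k1 : ℂ) * (x k2 : ℂ))
      * Complex.exp (Complex.I * ((∑ i, t0 i * x i : ℝ) : ℂ)) :=
    ((Complex.measurable_ofReal.comp (measurable_pi_apply k1)).mul
      (Complex.measurable_ofReal.comp (measurable_pi_apply k2))).mul hFAm
  have hSBm : Measurable fun p : (Fin K → ℝ) × ℝ => (∑ k, b k * u * p.1 k + -u * p.2 : ℝ) :=
    (Finset.measurable_sum _ fun k _ =>
      measurable_const.mul ((measurable_pi_apply k).comp measurable_fst)).add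
      (measurable_const.mul measurable_snd)
  have hGBm : Measurable fun p : (Fin K → ℝ) × ℝ =>
      Complex.exp (Complex.I * ((∑ k, b k * u * p.1 k + -u * p.2 : ℝ) : ℂ)) :=
    EIVAux.measurable_cexpI' hSBm
  have hGB1m : Measurable fun p : (Fin K → ℝ) × ℝ => (p.1 k1 : ℂ)
      * Complex.exp (Complex.I * ((∑ k, b k * u * p.1 k + -u * p.2 : ℝ) : ℂ)) :=
    (Complex.measurable_ofReal.comp ((measurable_pi_apply k1).comp measurable_fst)).mul hGBm
  have hGB2m : Measurable fun p : (Fin K → ℝ) × ℝ => (p.1 k2 : ℂ)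
      * Complex.exp (Complex.I * ((∑ k, b k * u * p.1 k + -u * p.2 : ℝ) : ℂ)) :=
    (Complex.measurable_ofReal.comp ((measurable_pi_apply k2).comp measurable_fst)).mul hGBm
  have hGB12m : Measurable fun p : (Fin K → ℝ) × ℝ => ((p.1 k1 : ℂ) * (p.1 k2 : ℂ))
      * Complex.exp (Complex.I * ((∑ k, b k * u * p.1 k + -u * p.2 : ℝ) : ℂ)) :=
    ((Complex.measurable_ofReal.comp ((measurable_pi_apply k1).comp measurable_fst)).mul
      (Complex.measurable_ofReal.comp ((measurable_pi_apply k2).comp measurable_fst))).mul hGBm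
  -- factorizations across the independence of Xstar and (U, eps)
  have hfac := fun (F : (Fin K → ℝ) → ℂ) (G : (Fin K → ℝ) × ℝ → ℂ)
      (hF : Measurable F) (hG : Measurable G) =>
    EIVAux.indep_integral_mul (μ := μ) hIndep2.symm hXm hPm F G hF hG
  have fac_ac : (∫ ω, Complex.exp (Complex.I * ((∑ i, t0 i * Xstar ω i : ℝ) : ℂ))
      * Complex.exp (Complex.I * ((∑ k, b k * u * U k ω + -u * eps ω : ℝ) : ℂ)) ∂μ)
      = a * c := hfac _ _ hFAm hGBm
  have fac_p1c : (∫ ω, (Xstar ω k1 : ℂ)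
      * Complex.exp (Complex.I * ((∑ i, t0 i * Xstar ω i : ℝ) : ℂ))
      * Complex.exp (Complex.I * ((∑ k, b k * u * U k ω + -u * eps ω : ℝ) : ℂ)) ∂μ)
      = p1 * c := hfac _ _ hFA1m hGBm
  have fac_p2c : (∫ ω, (Xstar ω k2 : ℂ)
      * Complex.exp (Complex.I * ((∑ i, t0 i * Xstar ω i : ℝ) : ℂ))
      * Complex.exp (Complex.I * ((∑ k, b k * u * U k ω + -u * eps ω : ℝ) : ℂ)) ∂μ)
      = p2 * c := hfac _ _ hFA2m hGBm
  have fac_aq1 : (∫ ω, Complex.exp (Complex.I * ((∑ i, t0 i * Xstar ω i : ℝ) : ℂ))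
      * ((U k1 ω : ℂ)
        * Complex.exp (Complex.I * ((∑ k, b k * u * U k ω + -u * eps ω : ℝ) : ℂ))) ∂μ)
      = a * q1 := hfac _ _ hFAm hGB1m
  have fac_aq2 : (∫ ω, Complex.exp (Complex.I * ((∑ i, t0 i * Xstar ω i : ℝ) : ℂ))
      * ((U k2 ω : ℂ)
        * Complex.exp (Complex.I * ((∑ k, b k * u * U k ω + -u * eps ω : ℝ) : ℂ))) ∂μ)
      = a * q2 := hfac _ _ hFAm hGB2m
  have fac_rc : (∫ ω, ((Xstar ω k1 : ℂ) * (Xstar ω k2 : ℂ))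
      * Complex.exp (Complex.I * ((∑ i, t0 i * Xstar ω i : ℝ) : ℂ))
      * Complex.exp (Complex.I * ((∑ k, b k * u * U k ω + -u * eps ω : ℝ) : ℂ)) ∂μ)
      = r * c := hfac _ _ hFA12m hGBm
  have fac_p1q2 : (∫ ω, (Xstar ω k1 : ℂ)
      * Complex.exp (Complex.I * ((∑ i, t0 i * Xstar ω i : ℝ) : ℂ))
      * ((U k2 ω : ℂ)
        * Complex.exp (Complex.I * ((∑ k, b k * u * U k ω + -u * eps ω : ℝ) : ℂ))) ∂μ)
      = p1 * q2 := hfac _ _ hFA1m hGB2m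
  have fac_p2q1 : (∫ ω, (Xstar ω k2 : ℂ)
      * Complex.exp (Complex.I * ((∑ i, t0 i * Xstar ω i : ℝ) : ℂ))
      * ((U k1 ω : ℂ)
        * Complex.exp (Complex.I * ((∑ k, b k * u * U k ω + -u * eps ω : ℝ) : ℂ))) ∂μ)
      = p2 * q1 := hfac _ _ hFA2m hGB1m
  have fac_am : (∫ ω, Complex.exp (Complex.I * ((∑ i, t0 i * Xstar ω i : ℝ) : ℂ))
      * (((U k1 ω : ℂ) * (U k2 ω : ℂ))
        * Complex.exp (Complex.I * ((∑ k, b k * u * U k ω + -u * eps ω : ℝ) : ℂ))) ∂μ)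
      = a * m := hfac _ _ hFAm hGB12m
  -- integrability of summands
  have hABm : Measurable fun ω =>
      (∑ i, t0 i * Xstar ω i) + (∑ k, b k * u * U k ω + -u * eps ω) :=
    (Finset.measurable_sum _ fun i _ => measurable_const.mul (hXsm i)).add
      ((Finset.measurable_sum _ fun k _ => measurable_const.mul (hUm k)).add
        (measurable_const.mul hem))
  have int1 : Integrable (fun ω => (Xstar ω k1 : ℂ)
      * Complex.exp (Complex.I * ((∑ i, t0 i * Xstar ω i : ℝ) : ℂ))
      * Complex.exp (Complex.I * ((∑ k, b k * u * U k ω + -u * eps ω : ℝ) : ℂ))) μ := by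
    refine (EIVAux.integrable_mul_exp (μ := μ) (hXsint k1) hABm).congr
      (Filter.Eventually.of_forall fun ω => ?_)
    dsimp only
    rw [hsplitE]; ring
  have int2 : Integrable (fun ω => Complex.exp
      (Complex.I * ((∑ i, t0 i * Xstar ω i : ℝ) : ℂ))
      * ((U k1 ω : ℂ)
        * Complex.exp (Complex.I * ((∑ k, b k * u * U k ω + -u * eps ω : ℝ) : ℂ)))) μ := by
    refine (EIVAux.integrable_mul_exp (μ := μ) (hUint k1) hABm).congr
      (Filter.Eventually.of_forall fun ω => ?_)
    dsimp only
    rw [hsplitE]; ring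
  have int1' : Integrable (fun ω => (Xstar ω k2 : ℂ)
      * Complex.exp (Complex.I * ((∑ i, t0 i * Xstar ω i : ℝ) : ℂ))
      * Complex.exp (Complex.I * ((∑ k, b k * u * U k ω + -u * eps ω : ℝ) : ℂ))) μ := by
    refine (EIVAux.integrable_mul_exp (μ := μ) (hXsint k2) hABm).congr
      (Filter.Eventually.of_forall fun ω => ?_)
    dsimp only
    rw [hsplitE]; ring
  have int2' : Integrable (fun ω => Complex.exp
      (Complex.I * ((∑ i, t0 i * Xstar ω i : ℝ) : ℂ))
      * ((U k2 ω : ℂ)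
        * Complex.exp (Complex.I * ((∑ k, b k * u * U k ω + -u * eps ω : ℝ) : ℂ)))) μ := by
    refine (EIVAux.integrable_mul_exp (μ := μ) (hUint k2) hABm).congr
      (Filter.Eventually.of_forall fun ω => ?_)
    dsimp only
    rw [hsplitE]; ring
  have intr : Integrable (fun ω => ((Xstar ω k1 : ℂ) * (Xstar ω k2 : ℂ))
      * Complex.exp (Complex.I * ((∑ i, t0 i * Xstar ω i : ℝ) : ℂ))
      * Complex.exp (Complex.I * ((∑ k, b k * u * U k ω + -u * eps ω : ℝ) : ℂ))) μ := by
    refine (EIVAux.integrable_mul_exp (μ := μ)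
      (EIVAux.memL2_int_mul (hL2X k1) (hL2X k2)) hABm).congr
      (Filter.Eventually.of_forall fun ω => ?_)
    dsimp only
    rw [hsplitE]; push_cast; ring
  have intp1q2 : Integrable (fun ω => (Xstar ω k1 : ℂ)
      * Complex.exp (Complex.I * ((∑ i, t0 i * Xstar ω i : ℝ) : ℂ))
      * ((U k2 ω : ℂ)
        * Complex.exp (Complex.I * ((∑ k, b k * u * U k ω + -u * eps ω : ℝ) : ℂ)))) μ := by
    refine (EIVAux.integrable_mul_exp (μ := μ)
      (EIVAux.memL2_int_mul (hL2X k1) (hL2U k2)) hABm).congr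
      (Filter.Eventually.of_forall fun ω => ?_)
    dsimp only
    rw [hsplitE]; push_cast; ring
  have intp2q1 : Integrable (fun ω => (Xstar ω k2 : ℂ)
      * Complex.exp (Complex.I * ((∑ i, t0 i * Xstar ω i : ℝ) : ℂ))
      * ((U k1 ω : ℂ)
        * Complex.exp (Complex.I * ((∑ k, b k * u * U k ω + -u * eps ω : ℝ) : ℂ)))) μ := by
    refine (EIVAux.integrable_mul_exp (μ := μ)
      (EIVAux.memL2_int_mul (hL2X k2) (hL2U k1)) hABm).congr
      (Filter.Eventually.of_forall fun ω => ?_)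
    dsimp only
    rw [hsplitE]; push_cast; ring
  have intam : Integrable (fun ω => Complex.exp
      (Complex.I * ((∑ i, t0 i * Xstar ω i : ℝ) : ℂ))
      * (((U k1 ω : ℂ) * (U k2 ω : ℂ))
        * Complex.exp (Complex.I * ((∑ k, b k * u * U k ω + -u * eps ω : ℝ) : ℂ)))) μ := by
    refine (EIVAux.integrable_mul_exp (μ := μ)
      (EIVAux.memL2_int_mul (hL2U k1) (hL2U k2)) hABm).congr
      (Filter.Eventually.of_forall fun ω => ?_)
    dsimp only
    rw [hsplitE]; push_cast; ring
  have int34 : Integrable (fun ω => (Xstar ω k2 : ℂ)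
      * Complex.exp (Complex.I * ((∑ i, t0 i * Xstar ω i : ℝ) : ℂ))
      * ((U k1 ω : ℂ)
        * Complex.exp (Complex.I * ((∑ k, b k * u * U k ω + -u * eps ω : ℝ) : ℂ)))
      + (Complex.exp
      (Complex.I * ((∑ i, t0 i * Xstar ω i : ℝ) : ℂ))
      * (((U k1 ω : ℂ) * (U k2 ω : ℂ))
        * Complex.exp (Complex.I * ((∑ k, b k * u * U k ω + -u * eps ω : ℝ) : ℂ))))) μ := intp2q1.add intam
  have int234 : Integrable (fun ω => (Xstar ω k1 : ℂ)
      * Complex.exp (Complex.I * ((∑ i, t0 i * Xstar ω i : ℝ) : ℂ))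
      * ((U k2 ω : ℂ)
        * Complex.exp (Complex.I * ((∑ k, b k * u * U k ω + -u * eps ω : ℝ) : ℂ)))
      + ((Xstar ω k2 : ℂ)
      * Complex.exp (Complex.I * ((∑ i, t0 i * Xstar ω i : ℝ) : ℂ))
      * ((U k1 ω : ℂ)
        * Complex.exp (Complex.I * ((∑ k, b k * u * U k ω + -u * eps ω : ℝ) : ℂ)))
      + (Complex.exp
      (Complex.I * ((∑ i, t0 i * Xstar ω i : ℝ) : ℂ))
      * (((U k1 ω : ℂ) * (U k2 ω : ℂ))
        * Complex.exp (Complex.I * ((∑ k, b k * u * U k ω + -u * eps ω : ℝ) : ℂ)))))) μ := intp1q2.add int34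
  -- the characteristic function of (X, Y) at s0 factorizes
  have hphiW : charF μ W s0 = a * c := by
    have step : ∀ ω : Ω, Complex.exp (Complex.I * ((∑ j, s0 j * W ω j : ℝ) : ℂ))
        = Complex.exp (Complex.I * ((∑ i, t0 i * Xstar ω i : ℝ) : ℂ))
          * Complex.exp (Complex.I * ((∑ k, b k * u * U k ω + -u * eps ω : ℝ) : ℂ)) := by
      intro ω; rw [hexp ω, hsplitE]
    calc charF μ W s0
        = ∫ ω, Complex.exp (Complex.I * ((∑ j, s0 j * W ω j : ℝ) : ℂ)) ∂μ := rfl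
      _ = a * c := by
          rw [integral_congr_ae (Filter.Eventually.of_forall step), fac_ac]
  have hIW1 : (∫ ω, (W ω (Fin.castSucc k1) : ℂ)
      * Complex.exp (Complex.I * ((∑ i, s0 i * W ω i : ℝ) : ℂ)) ∂μ) = p1 * c + a * q1 := by
    have step : ∀ ω : Ω, (W ω (Fin.castSucc k1) : ℂ)
        * Complex.exp (Complex.I * ((∑ i, s0 i * W ω i : ℝ) : ℂ))
        = (Xstar ω k1 : ℂ) * Complex.exp (Complex.I * ((∑ i, t0 i * Xstar ω i : ℝ) : ℂ))
            * Complex.exp (Complex.I * ((∑ k, b k * u * U k ω + -u * eps ω : ℝ) : ℂ))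
          + Complex.exp (Complex.I * ((∑ i, t0 i * Xstar ω i : ℝ) : ℂ))
            * ((U k1 ω : ℂ) * Complex.exp
              (Complex.I * ((∑ k, b k * u * U k ω + -u * eps ω : ℝ) : ℂ))) := by
      intro ω
      rw [hexp ω, hWc k1 ω, hsplitE]
      push_cast
      ring
    rw [integral_congr_ae (Filter.Eventually.of_forall step), integral_add int1 int2,
      fac_p1c, fac_aq1]
  have hIW2 : (∫ ω, (W ω (Fin.castSucc k2) : ℂ)
      * Complex.exp (Complex.I * ((∑ i, s0 i * W ω i : ℝ) : ℂ)) ∂μ) = p2 * c + a * q2 := by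
    have step : ∀ ω : Ω, (W ω (Fin.castSucc k2) : ℂ)
        * Complex.exp (Complex.I * ((∑ i, s0 i * W ω i : ℝ) : ℂ))
        = (Xstar ω k2 : ℂ) * Complex.exp (Complex.I * ((∑ i, t0 i * Xstar ω i : ℝ) : ℂ))
            * Complex.exp (Complex.I * ((∑ k, b k * u * U k ω + -u * eps ω : ℝ) : ℂ))
          + Complex.exp (Complex.I * ((∑ i, t0 i * Xstar ω i : ℝ) : ℂ))
            * ((U k2 ω : ℂ) * Complex.exp
              (Complex.I * ((∑ k, b k * u * U k ω + -u * eps ω : ℝ) : ℂ))) := by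
      intro ω
      rw [hexp ω, hWc k2 ω, hsplitE]
      push_cast
      ring
    rw [integral_congr_ae (Filter.Eventually.of_forall step), integral_add int1' int2',
      fac_p2c, fac_aq2]
  have hIW12 : (∫ ω, ((W ω (Fin.castSucc k1) : ℂ) * (W ω (Fin.castSucc k2) : ℂ))
      * Complex.exp (Complex.I * ((∑ i, s0 i * W ω i : ℝ) : ℂ)) ∂μ)
      = r * c + (p1 * q2 + (p2 * q1 + a * m)) := by
    have step : ∀ ω : Ω, ((W ω (Fin.castSucc k1) : ℂ) * (W ω (Fin.castSucc k2) : ℂ))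
        * Complex.exp (Complex.I * ((∑ i, s0 i * W ω i : ℝ) : ℂ))
        = ((Xstar ω k1 : ℂ) * (Xstar ω k2 : ℂ))
            * Complex.exp (Complex.I * ((∑ i, t0 i * Xstar ω i : ℝ) : ℂ))
            * Complex.exp (Complex.I * ((∑ k, b k * u * U k ω + -u * eps ω : ℝ) : ℂ))
          + ((Xstar ω k1 : ℂ) * Complex.exp (Complex.I * ((∑ i, t0 i * Xstar ω i : ℝ) : ℂ))
              * ((U k2 ω : ℂ) * Complex.exp
                (Complex.I * ((∑ k, b k * u * U k ω + -u * eps ω : ℝ) : ℂ)))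
            + ((Xstar ω k2 : ℂ) * Complex.exp (Complex.I * ((∑ i, t0 i * Xstar ω i : ℝ) : ℂ))
                * ((U k1 ω : ℂ) * Complex.exp
                  (Complex.I * ((∑ k, b k * u * U k ω + -u * eps ω : ℝ) : ℂ)))
              + Complex.exp (Complex.I * ((∑ i, t0 i * Xstar ω i : ℝ) : ℂ))
                * (((U k1 ω : ℂ) * (U k2 ω : ℂ)) * Complex.exp
                  (Complex.I * ((∑ k, b k * u * U k ω + -u * eps ω : ℝ) : ℂ))))) := by
      intro ω
      rw [hexp ω, hWc k1 ω, hWc k2 ω, hsplitE]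
      push_cast
      ring
    rw [integral_congr_ae (Filter.Eventually.of_forall step),
      integral_add intr int234,
      integral_add intp1q2 int34,
      integral_add intp2q1 intam,
      fac_rc, fac_p1q2, fac_p2q1, fac_am]

  -- m * c = q1 * q2 via mutual independence of (U, eps)
  have hVc : ∀ k ω, V (Fin.castSucc k) ω = U k ω := by
    intro k ω
    simp [hV, Fin.snoc_castSucc]
  set T : Finset (Fin (K+1)) := Finset.univ.erase (Fin.castSucc k1) with hT
  have hi2T : (Fin.castSucc k2) ∈ T :=
    Finset.mem_erase.mpr ⟨by simpa [Fin.castSucc_inj] using hk.symm, Finset.mem_univ _⟩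
  have hdisj : Disjoint ({Fin.castSucc k1} : Finset (Fin (K+1))) T :=
    Finset.disjoint_singleton_left.mpr (Finset.notMem_erase _ _)
  have hsplitV := hIndep1.indepFun_finset {Fin.castSucc k1} T hdisj hVm
  have hLm : Measurable (fun ω (i : ({Fin.castSucc k1} : Finset (Fin (K+1)))) => V i ω) :=
    measurable_pi_lambda _ fun i => hVm i
  have hRm : Measurable (fun ω (i : T) => V i ω) :=
    measurable_pi_lambda _ fun i => hVm i
  have hVfac := fun (F : (({Fin.castSucc k1} : Finset (Fin (K+1))) → ℝ) → ℂ)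
      (G : ({ x // x ∈ T } → ℝ) → ℂ) (hF : Measurable F) (hG : Measurable G) =>
    EIVAux.indep_integral_mul (μ := μ) hsplitV hLm hRm F G hF hG
  have hBsum : ∀ ω, (∑ k, b k * u * U k ω + -u * eps ω)
      = s0 (Fin.castSucc k1) * V (Fin.castSucc k1) ω + ∑ i : T, s0 i * V i ω := by
    intro ω
    have h0 : (∑ k, b k * u * U k ω + -u * eps ω) = ∑ i, s0 i * V i ω := by
      rw [Fin.sum_univ_castSucc]
      simp [hs0, hV, Fin.snoc_castSucc, Fin.snoc_last]
    rw [h0, ← Finset.add_sum_erase _ _ (Finset.mem_univ (Fin.castSucc k1))]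
    congr 1
    exact (Finset.sum_coe_sort T _).symm
  have hF1m : Measurable fun x : ({Fin.castSucc k1} : Finset (Fin (K+1))) → ℝ =>
      Complex.exp (Complex.I * ((s0 (Fin.castSucc k1)
        * x ⟨Fin.castSucc k1, Finset.mem_singleton_self _⟩ : ℝ) : ℂ)) :=
    EIVAux.measurable_cexpI' (measurable_const.mul (measurable_pi_apply _))
  have hF2m : Measurable fun x : ({Fin.castSucc k1} : Finset (Fin (K+1))) → ℝ =>
      (x ⟨Fin.castSucc k1, Finset.mem_singleton_self _⟩ : ℂ)
        * Complex.exp (Complex.I * ((s0 (Fin.castSucc k1)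
          * x ⟨Fin.castSucc k1, Finset.mem_singleton_self _⟩ : ℝ) : ℂ)) :=
    (Complex.measurable_ofReal.comp (measurable_pi_apply _)).mul hF1m
  have hG1m : Measurable fun y : { x // x ∈ T } → ℝ =>
      Complex.exp (Complex.I * ((∑ i : T, s0 i * y i : ℝ) : ℂ)) :=
    EIVAux.measurable_cexpI' (Finset.measurable_sum _ fun i _ =>
      measurable_const.mul (measurable_pi_apply i))
  have hG2m : Measurable fun y : { x // x ∈ T } → ℝ =>
      (y ⟨Fin.castSucc k2, hi2T⟩ : ℂ)
        * Complex.exp (Complex.I * ((∑ i : T, s0 i * y i : ℝ) : ℂ)) :=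
    (Complex.measurable_ofReal.comp (measurable_pi_apply _)).mul hG1m
  have facV_c : (∫ ω, Complex.exp (Complex.I
        * ((s0 (Fin.castSucc k1) * V (Fin.castSucc k1) ω : ℝ) : ℂ))
        * Complex.exp (Complex.I * ((∑ i : T, s0 i * V i ω : ℝ) : ℂ)) ∂μ)
      = (∫ ω, Complex.exp (Complex.I
          * ((s0 (Fin.castSucc k1) * V (Fin.castSucc k1) ω : ℝ) : ℂ)) ∂μ)
        * ∫ ω, Complex.exp (Complex.I * ((∑ i : T, s0 i * V i ω : ℝ) : ℂ)) ∂μ :=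
    hVfac _ _ hF1m hG1m
  have facV_q1 : (∫ ω, ((V (Fin.castSucc k1) ω : ℂ) * Complex.exp (Complex.I
        * ((s0 (Fin.castSucc k1) * V (Fin.castSucc k1) ω : ℝ) : ℂ)))
        * Complex.exp (Complex.I * ((∑ i : T, s0 i * V i ω : ℝ) : ℂ)) ∂μ)
      = (∫ ω, (V (Fin.castSucc k1) ω : ℂ) * Complex.exp (Complex.I
          * ((s0 (Fin.castSucc k1) * V (Fin.castSucc k1) ω : ℝ) : ℂ)) ∂μ)
        * ∫ ω, Complex.exp (Complex.I * ((∑ i : T, s0 i * V i ω : ℝ) : ℂ)) ∂μ :=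
    hVfac _ _ hF2m hG1m
  have facV_q2 : (∫ ω, Complex.exp (Complex.I
        * ((s0 (Fin.castSucc k1) * V (Fin.castSucc k1) ω : ℝ) : ℂ))
        * ((V (Fin.castSucc k2) ω : ℂ)
          * Complex.exp (Complex.I * ((∑ i : T, s0 i * V i ω : ℝ) : ℂ))) ∂μ)
      = (∫ ω, Complex.exp (Complex.I
          * ((s0 (Fin.castSucc k1) * V (Fin.castSucc k1) ω : ℝ) : ℂ)) ∂μ)
        * ∫ ω, (V (Fin.castSucc k2) ω : ℂ)
          * Complex.exp (Complex.I * ((∑ i : T, s0 i * V i ω : ℝ) : ℂ)) ∂μ :=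
    hVfac _ _ hF1m hG2m
  have facV_m : (∫ ω, ((V (Fin.castSucc k1) ω : ℂ) * Complex.exp (Complex.I
        * ((s0 (Fin.castSucc k1) * V (Fin.castSucc k1) ω : ℝ) : ℂ)))
        * ((V (Fin.castSucc k2) ω : ℂ)
          * Complex.exp (Complex.I * ((∑ i : T, s0 i * V i ω : ℝ) : ℂ))) ∂μ)
      = (∫ ω, (V (Fin.castSucc k1) ω : ℂ) * Complex.exp (Complex.I
          * ((s0 (Fin.castSucc k1) * V (Fin.castSucc k1) ω : ℝ) : ℂ)) ∂μ)
        * ∫ ω, (V (Fin.castSucc k2) ω : ℂ)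
          * Complex.exp (Complex.I * ((∑ i : T, s0 i * V i ω : ℝ) : ℂ)) ∂μ :=
    hVfac _ _ hF2m hG2m
  have ec : c = (∫ ω, Complex.exp (Complex.I
        * ((s0 (Fin.castSucc k1) * V (Fin.castSucc k1) ω : ℝ) : ℂ)) ∂μ)
      * ∫ ω, Complex.exp (Complex.I * ((∑ i : T, s0 i * V i ω : ℝ) : ℂ)) ∂μ := by
    rw [hcc, ← facV_c]
    refine integral_congr_ae (Filter.Eventually.of_forall fun ω => ?_)
    dsimp only
    rw [hBsum ω, hsplitE]
  have eq1 : q1 = (∫ ω, (V (Fin.castSucc k1) ω : ℂ) * Complex.exp (Complex.I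
        * ((s0 (Fin.castSucc k1) * V (Fin.castSucc k1) ω : ℝ) : ℂ)) ∂μ)
      * ∫ ω, Complex.exp (Complex.I * ((∑ i : T, s0 i * V i ω : ℝ) : ℂ)) ∂μ := by
    rw [hq1, ← facV_q1]
    refine integral_congr_ae (Filter.Eventually.of_forall fun ω => ?_)
    dsimp only
    rw [hBsum ω, hsplitE, hVc k1 ω]
    ring
  have eq2 : q2 = (∫ ω, Complex.exp (Complex.I
        * ((s0 (Fin.castSucc k1) * V (Fin.castSucc k1) ω : ℝ) : ℂ)) ∂μ)
      * ∫ ω, (V (Fin.castSucc k2) ω : ℂ)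
        * Complex.exp (Complex.I * ((∑ i : T, s0 i * V i ω : ℝ) : ℂ)) ∂μ := by
    rw [hq2, ← facV_q2]
    refine integral_congr_ae (Filter.Eventually.of_forall fun ω => ?_)
    dsimp only
    rw [hBsum ω, hsplitE, hVc k2 ω]
    ring
  have em : m = (∫ ω, (V (Fin.castSucc k1) ω : ℂ) * Complex.exp (Complex.I
        * ((s0 (Fin.castSucc k1) * V (Fin.castSucc k1) ω : ℝ) : ℂ)) ∂μ)
      * ∫ ω, (V (Fin.castSucc k2) ω : ℂ)
        * Complex.exp (Complex.I * ((∑ i : T, s0 i * V i ω : ℝ) : ℂ)) ∂μ := by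
    rw [hm, ← facV_m]
    refine integral_congr_ae (Filter.Eventually.of_forall fun ω => ?_)
    dsimp only
    rw [hBsum ω, hsplitE, hVc k1 ω, hVc k2 ω]
    ring
  have hmc : m * c = q1 * q2 := by
    rw [ec, eq1, eq2, em]
    ring
  -- covariance part
  have hUU : (∫ ω, U k1 ω * U k2 ω ∂μ) = (∫ ω, U k1 ω ∂μ) * ∫ ω, U k2 ω ∂μ := by
    have hne12 : (Fin.castSucc k1) ≠ (Fin.castSucc k2) := by
      simpa [Fin.castSucc_inj] using hk
    have hind : IndepFun (V (Fin.castSucc k1)) (V (Fin.castSucc k2)) μ :=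
      hIndep1.indepFun hne12
    have := EIVAux.indep_integral_mul (μ := μ) hind
      (hVm _) (hVm _) (id : ℝ → ℝ) (id : ℝ → ℝ) measurable_id measurable_id
    have hVU1 : V (Fin.castSucc k1) = U k1 := by rw [hV]; exact Fin.snoc_castSucc _ _ _
    have hVU2 : V (Fin.castSucc k2) = U k2 := by rw [hV]; exact Fin.snoc_castSucc _ _ _
    rw [hVU1, hVU2] at this
    exact this
  have hXU : (∫ ω, Xstar ω k1 * U k2 ω ∂μ)
      = (∫ ω, Xstar ω k1 ∂μ) * ∫ ω, U k2 ω ∂μ :=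
    EIVAux.indep_integral_mul (μ := μ) hIndep2.symm hXm hPm
      (fun x => x k1) (fun p => p.1 k2) (measurable_pi_apply k1)
      ((measurable_pi_apply k2).comp measurable_fst)
  have hUX : (∫ ω, U k1 ω * Xstar ω k2 ∂μ)
      = (∫ ω, U k1 ω ∂μ) * ∫ ω, Xstar ω k2 ∂μ :=
    EIVAux.indep_integral_mul (μ := μ) hIndep2 hPm hXm
      (fun p => p.1 k1) (fun x => x k2)
      ((measurable_pi_apply k1).comp measurable_fst) (measurable_pi_apply k2)
  have hcov : cov μ (X k1) (X k2)
      = cov μ (fun ω => Xstar ω k1) (fun ω => Xstar ω k2) := by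
    have i11 := EIVAux.memL2_int_mul (hL2X k1) (hL2X k2)
    have i12 := EIVAux.memL2_int_mul (hL2X k1) (hL2U k2)
    have i21 := EIVAux.memL2_int_mul (hL2U k1) (hL2X k2)
    have i22 := EIVAux.memL2_int_mul (hL2U k1) (hL2U k2)
    have i2134 : Integrable (fun ω => U k1 ω * Xstar ω k2 + U k1 ω * U k2 ω) μ := i21.add i22
    have i1234 : Integrable (fun ω => Xstar ω k1 * U k2 ω
        + (U k1 ω * Xstar ω k2 + U k1 ω * U k2 ω)) μ := i12.add i2134
    have e1 : (∫ ω, X k1 ω * X k2 ω ∂μ)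
        = ∫ ω, Xstar ω k1 * Xstar ω k2 ∂μ
          + ((∫ ω, Xstar ω k1 ∂μ) * ∫ ω, U k2 ω ∂μ
          + ((∫ ω, U k1 ω ∂μ) * ∫ ω, Xstar ω k2 ∂μ
          + (∫ ω, U k1 ω ∂μ) * ∫ ω, U k2 ω ∂μ)) := by
      rw [integral_congr_ae (Filter.Eventually.of_forall (fun ω => show X k1 ω * X k2 ω
          = Xstar ω k1 * Xstar ω k2 + (Xstar ω k1 * U k2 ω
            + (U k1 ω * Xstar ω k2 + U k1 ω * U k2 ω)) from by
        rw [hX k1 ω, hX k2 ω]; ring)), integral_add i11 i1234, integral_add i12 i2134,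
        integral_add i21 i22, hXU, hUX, hUU]
    have e2 : (∫ ω, X k1 ω ∂μ) = (∫ ω, Xstar ω k1 ∂μ) + ∫ ω, U k1 ω ∂μ := by
      rw [integral_congr_ae (Filter.Eventually.of_forall (fun ω => hX k1 ω)),
        integral_add (hXsint k1) (hUint k1)]
    have e3 : (∫ ω, X k2 ω ∂μ) = (∫ ω, Xstar ω k2 ∂μ) + ∫ ω, U k2 ω ∂μ := by
      rw [integral_congr_ae (Filter.Eventually.of_forall (fun ω => hX k2 ω)),
        integral_add (hXsint k2) (hUint k2)]
    rw [cov, cov, e1, e2, e3]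
    ring
  -- non-vanishing
  rw [hphiW] at hne
  have ha0 : a ≠ 0 := fun h => hne (by rw [h, zero_mul])
  have hc0 : c ≠ 0 := fun h => hne (by rw [h, mul_zero])
  -- final assembly
  rw [hIW1, hIW2, hIW12, hphiW] at hLamW
  rw [hcov, hLamW, hLamX]
  rw [show ((cov μ (fun ω => Xstar ω k1) (fun ω => Xstar ω k2) : ℝ) : ℂ)
      = ((cov μ (fun ω => Xstar ω k1) (fun ω => Xstar ω k2) : ℝ) : ℂ) from rfl]
  have goal : -(r * c + (p1 * q2 + (p2 * q1 + a * m))) / (a * c)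
      + (p1 * c + a * q1) * (p2 * c + a * q2) / (a * c) ^ 2
      = -r / a + p1 * p2 / a ^ 2 := by
    field_simp
    ring_nf
    linear_combination (-(a ^ 2)) * hmc
  rw [goal]
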